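/- arXiv:0807.4671 — 2 statements merged into one kernel-verified Lean document; each statement's English description precedes it below -/
import Mathlib

section
/- Let q = 2^r with r a positive integer, let m be a positive integer, and let β ∈ 𝔽_q. Then Σ_{a ∈ 𝔽_q^*} λ(−aβ) K_m(λ;a) equals q·K_{m−1}(λ;β^{−1}) + (−1)^{m+1} if β ≠ 0, and equals (−1)^{m+1} if β = 0, with the convention K₀(λ;γ) = λ(γ). -/
open Finset Matrix

/-- The quadratic form `θ⁺(x) = ∑ i, x_i x_{n+i}` on `F^{2n}` (columns indexed by `Fin n ⊕ Fin n`). -/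
def thetaPlus (F : Type) [Field F] (n : ℕ) (x : Fin n ⊕ Fin n → F) : F :=
  ∑ i : Fin n, x (Sum.inl i) * x (Sum.inr i)

/-- The orthogonal group `O⁺(2n,q)`: invertible matrices preserving `θ⁺`. -/
noncomputable def OplusGrp (F : Type) [Field F] [Fintype F] [DecidableEq F] (n : ℕ) :
    Finset (Matrix (Fin n ⊕ Fin n) (Fin n ⊕ Fin n) F) := by
  classical
  exact Finset.univ.filter (fun w => IsUnit w ∧
    ∀ x : Fin n ⊕ Fin n → F, thetaPlus F n (w.mulVec x) = thetaPlus F n x)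

/-- `SO⁺(2n,q)`: the kernel of `δ⁺(w) = Tr(B ᵗC)` on `O⁺(2n,q)`,
where `w = [[A,B],[C,D]]` in `n × n` blocks. -/
noncomputable def SOplusGrp (F : Type) [Field F] [Fintype F] [DecidableEq F] (n : ℕ) :
    Finset (Matrix (Fin n ⊕ Fin n) (Fin n ⊕ Fin n) F) := by
  classical
  exact (OplusGrp F n).filter
    (fun w => Matrix.trace (Matrix.toBlocks₁₂ w * (Matrix.toBlocks₂₁ w)ᵀ) = 0)

/-- The trace map `tr(x) = x + x² + ⋯ + x^{2^{r−1}}`, valued in `𝔽₂ = {0,1} ⊆ F`. -/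
def trF (F : Type) [Field F] (r : ℕ) (x : F) : F := ∑ i ∈ Finset.range r, x ^ 2 ^ i

/-- The canonical additive character `λ(x) = (−1)^{tr(x)} ∈ {±1} ⊆ ℤ`. -/
noncomputable def lam (F : Type) [Field F] (r : ℕ) (x : F) : ℤ := by
  classical exact if trF F r x = 0 then 1 else -1

/-- The trace map `tr` viewed as a function into `𝔽₂ = ZMod 2`. -/
noncomputable def tr2 (F : Type) [Field F] (r : ℕ) (x : F) : ZMod 2 := by
  classical exact if trF F r x = 0 then 0 else 1

/-- The Kloosterman sum `K(λ;a) = ∑_{α ∈ F*} λ(α + aα⁻¹)`. -/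
noncomputable def Kl (F : Type) [Field F] [Fintype F] (r : ℕ) (a : F) : ℤ := by
  classical
  exact ∑ α ∈ Finset.univ.filter (fun α : F => α ≠ 0), lam F r (α + a * α⁻¹)

/-- The `m`-dimensional Kloosterman sum
`K_m(λ;a) = ∑_{α₁,…,α_m ∈ F*} λ(α₁ + ⋯ + α_m + aα₁⁻¹⋯α_m⁻¹)`;
for `m = 0` this is `K₀(λ;a) = λ(a)`. -/
noncomputable def Klm (F : Type) [Field F] [Fintype F] (r m : ℕ) (a : F) : ℤ := by
  classical
  exact ∑ v ∈ Finset.univ.filter (fun v : Fin m → F => ∀ i, v i ≠ 0),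
    lam F r ((∑ i, v i) + a * (∏ i, v i)⁻¹)

/-- The power moment `MK^h = ∑_{a ∈ F*} K(λ;a)^h`. -/
noncomputable def MK (F : Type) [Field F] [Fintype F] (r h : ℕ) : ℤ := by
  classical exact ∑ a ∈ Finset.univ.filter (fun a : F => a ≠ 0), (Kl F r a) ^ h

/-- The power moment `MK₂^h = ∑_{a ∈ F*} K₂(λ;a)^h` of 2-dimensional Kloosterman sums. -/
noncomputable def MK2 (F : Type) [Field F] [Fintype F] (r h : ℕ) : ℤ := by
  classical exact ∑ a ∈ Finset.univ.filter (fun a : F => a ≠ 0), (Klm F r 2 a) ^ h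

/-- The binary code `C(G) = {u ∈ 𝔽₂^G : ∑_{g ∈ G} u_g Tr(g) = 0 in F}`. -/
noncomputable def code (F : Type) [Field F] [Fintype F] [DecidableEq F]
    {ι : Type} [Fintype ι] [DecidableEq ι] (G : Finset (Matrix ι ι F)) :
    Finset (↥G → ZMod 2) := by
  classical
  exact Finset.univ.filter
    (fun u => ∑ g : ↥G, (u g).val • Matrix.trace (g : Matrix ι ι F) = 0)

/-- Number of codewords of Hamming weight `j` in the code `C(G)`. -/
noncomputable def wtCount (F : Type) [Field F] [Fintype F] [DecidableEq F]
    {ι : Type} [Fintype ι] [DecidableEq ι] (G : Finset (Matrix ι ι F)) (j : ℕ) : ℕ := by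
  classical
  exact ((code F G).filter
    (fun u => (Finset.univ.filter (fun g : ↥G => u g = 1)).card = j)).card

/-- `t! · S(h,t)` where `S(h,t)` is the Stirling number of the second kind,
`S(h,t) = (1/t!) ∑_{j=0}^{t} (−1)^{t−j} C(t,j) j^h`. -/
def tS (h t : ℕ) : ℤ :=
  ∑ j ∈ Finset.range (t + 1), (-1 : ℤ) ^ (t - j) * (t.choose j : ℤ) * (j : ℤ) ^ h

/-- Binomial coefficient with integer arguments: `0` whenever `k < 0` or `k > n`. -/
def ichoose (n k : ℤ) : ℤ := if 0 ≤ k ∧ k ≤ n then (n.toNat.choose k.toNat : ℤ) else 0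

section Aux
variable {F : Type} [Field F] [Fintype F] [DecidableEq F] {r : ℕ}

lemma charF (hr : 1 ≤ r) (hF : Fintype.card F = 2 ^ r) : CharP F 2 := by
  haveI : Fact (Nat.Prime 2) := ⟨Nat.prime_two⟩
  have hd : (2 : ℕ) ∣ ringChar F := by
    rw [prime_dvd_char_iff_dvd_card]
    exact hF ▸ dvd_pow_self 2 (by omega)
  have hp : (ringChar F).Prime := CharP.char_is_prime F (ringChar F)
  have h2 : ringChar F = 2 := ((Nat.prime_dvd_prime_iff_eq Nat.prime_two hp).mp hd).symm
  exact h2 ▸ ringChar.charP F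

variable [CharP F 2]

lemma trF_add (x y : F) : trF F r (x + y) = trF F r x + trF F r y := by
  haveI : Fact (Nat.Prime 2) := ⟨Nat.prime_two⟩
  unfold trF
  rw [← Finset.sum_add_distrib]
  exact Finset.sum_congr rfl fun i _ => add_pow_char_pow x y 2 i

lemma trF_zero : trF F r 0 = 0 := by
  unfold trF
  exact Finset.sum_eq_zero fun i _ => zero_pow (Nat.two_pow_pos i).ne'

lemma trF_mem (hF : Fintype.card F = 2 ^ r) (x : F) : trF F r x = 0 ∨ trF F r x = 1 := by
  haveI : Fact (Nat.Prime 2) := ⟨Nat.prime_two⟩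
  have hq : x ^ 2 ^ r = x := by rw [← hF]; exact FiniteField.pow_card x
  have hsq : trF F r x ^ 2 = trF F r x := by
    have h1 : trF F r x ^ 2 = ∑ i ∈ Finset.range r, x ^ 2 ^ (i + 1) := by
      unfold trF
      rw [sum_pow_char]
      exact Finset.sum_congr rfl fun i _ => by rw [← pow_mul, pow_succ]
    have h2 : (∑ i ∈ Finset.range r, x ^ 2 ^ (i + 1)) + x ^ 2 ^ 0
        = (∑ i ∈ Finset.range r, x ^ 2 ^ i) + x ^ 2 ^ r := by
      rw [← Finset.sum_range_succ' (fun i => x ^ 2 ^ i) r,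
          Finset.sum_range_succ (fun i => x ^ 2 ^ i) r]
    rw [pow_zero, pow_one, hq] at h2
    rw [h1]
    unfold trF
    exact add_right_cancel h2
  have hfac : trF F r x * (trF F r x - 1) = 0 := by ring_nf; linear_combination hsq
  rcases mul_eq_zero.mp hfac with h | h
  · exact Or.inl h
  · exact Or.inr (by linear_combination h)

lemma lam_zero : lam F r (0 : F) = 1 := by unfold lam; rw [if_pos trF_zero]

lemma lam_add (hF : Fintype.card F = 2 ^ r) (x y : F) :
    lam F r (x + y) = lam F r x * lam F r y := by
  unfold lam
  rw [trF_add]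
  rcases trF_mem hF x with hx | hx <;> rcases trF_mem hF y with hy | hy <;>
    simp [hx, hy, one_ne_zero, CharTwo.add_self_eq_zero]

lemma lam_sum (hF : Fintype.card F = 2 ^ r) {ι : Type*} (s : Finset ι) (f : ι → F) :
    lam F r (∑ i ∈ s, f i) = ∏ i ∈ s, lam F r (f i) := by
  classical
  induction s using Finset.cons_induction with
  | empty => simpa using lam_zero
  | cons a s ha ih => rw [Finset.sum_cons, Finset.prod_cons, lam_add hF, ih]

lemma exists_trF_ne (hr : 1 ≤ r) (hF : Fintype.card F = 2 ^ r) :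
    ∃ y : F, trF F r y ≠ 0 := by
  by_contra hc
  push_neg at hc
  set P : Polynomial F := ∑ i ∈ Finset.range r, Polynomial.X ^ 2 ^ i with hP
  have hev : ∀ x : F, P.eval x = 0 := by
    intro x
    have : P.eval x = trF F r x := by
      simp [hP, trF, Polynomial.eval_finset_sum]
    rw [this]; exact hc x
  have hdeg : P.natDegree ≤ 2 ^ (r - 1) := by
    refine Polynomial.natDegree_sum_le_of_forall_le _ _ fun i hi => ?_
    rw [Polynomial.natDegree_X_pow]
    exact Nat.pow_le_pow_right (by norm_num) (by have := Finset.mem_range.mp hi; omega)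
  have hzero : P = 0 := by
    refine Polynomial.eq_zero_of_forall_eval_zero_of_natDegree_lt_card P hev ?_
    calc (P.natDegree : Cardinal) ≤ ((2 ^ (r - 1) : ℕ) : Cardinal) := by exact_mod_cast hdeg
      _ < ((2 ^ r : ℕ) : Cardinal) := by
          exact_mod_cast Nat.pow_lt_pow_right (by norm_num) (by omega)
      _ = _ := by simp [Cardinal.mk_fintype, hF]
  have hco : P.coeff (2 ^ (r - 1)) = 1 := by
    rw [hP, Polynomial.finset_sum_coeff]
    have : ∀ i ∈ Finset.range r,
        (Polynomial.X ^ 2 ^ i : Polynomial F).coeff (2 ^ (r - 1))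
          = if i = r - 1 then 1 else 0 := by
      intro i _
      rw [Polynomial.coeff_X_pow]
      congr 1
      simp only [eq_iff_iff]
      constructor
      · intro h; exact Nat.pow_right_injective (le_refl 2) h.symm
      · intro h; rw [h]
    rw [Finset.sum_congr rfl this, Finset.sum_ite_eq' (Finset.range r) (r - 1) (fun _ => (1 : F))]
    rw [if_pos (Finset.mem_range.mpr (by omega))]
  rw [hzero] at hco
  simp at hco

lemma sum_lam_zero (hr : 1 ≤ r) (hF : Fintype.card F = 2 ^ r) :
    ∑ x : F, lam F r x = 0 := by
  obtain ⟨y, hy⟩ := exists_trF_ne hr hF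
  have key : (Finset.univ.filter fun x : F => trF F r x = 0).card
      = (Finset.univ.filter fun x : F => ¬ trF F r x = 0).card := by
    refine Finset.card_nbij (fun x => x + y) ?_ ?_ ?_
    · intro x hx
      simp only [Finset.mem_filter, Finset.coe_filter, Set.mem_setOf_eq, Finset.mem_univ, true_and] at hx ⊢
      rw [trF_add, hx, zero_add]; exact hy
    · intro x1 hx1 x2 hx2 h
      exact add_right_cancel h
    · intro z hz
      simp only [Finset.coe_filter, Finset.mem_univ, true_and, Set.mem_setOf_eq,
        Set.mem_image] at hz ⊢
      refine ⟨z + y, ?_, by rw [add_assoc, CharTwo.add_self_eq_zero, add_zero]⟩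
      rw [trF_add]
      rcases trF_mem hF z with h | h
      · exact absurd h hz
      · rcases trF_mem hF y with h' | h'
        · exact absurd h' hy
        · rw [h, h', CharTwo.add_self_eq_zero]
  classical
  rw [← Finset.sum_filter_add_sum_filter_not Finset.univ (fun x : F => trF F r x = 0)]
  have e1 : ∑ x ∈ Finset.univ.filter (fun x : F => trF F r x = 0), lam F r x
      = ∑ _x ∈ Finset.univ.filter (fun x : F => trF F r x = 0), (1 : ℤ) :=
    Finset.sum_congr rfl fun x hx => by
      unfold lam; rw [if_pos (Finset.mem_filter.mp hx).2]
  have e2 : ∑ x ∈ Finset.univ.filter (fun x : F => ¬ trF F r x = 0), lam F r x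
      = ∑ _x ∈ Finset.univ.filter (fun x : F => ¬ trF F r x = 0), (-1 : ℤ) :=
    Finset.sum_congr rfl fun x hx => by
      unfold lam; rw [if_neg (Finset.mem_filter.mp hx).2]
  rw [e1, e2]
  simp [key]

lemma sum_lam_mul (hr : 1 ≤ r) (hF : Fintype.card F = 2 ^ r) {c : F} (hc : c ≠ 0) :
    ∑ a : F, lam F r (a * c) = 0 := by
  rw [← sum_lam_zero hr hF]
  exact Finset.sum_nbij' (fun a => a * c) (fun b => b * c⁻¹)
    (fun _ _ => Finset.mem_univ _) (fun _ _ => Finset.mem_univ _)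
    (fun a _ => by field_simp) (fun b _ => by field_simp) (fun a _ => rfl)

lemma sum_lam_A (hr : 1 ≤ r) (hF : Fintype.card F = 2 ^ r) (c : F) :
    ∑ a ∈ Finset.univ.filter (fun a : F => a ≠ 0), lam F r (a * c)
      = if c = 0 then (2 ^ r - 1 : ℤ) else -1 := by
  have hfe : Finset.univ.filter (fun a : F => a ≠ 0) = Finset.univ.erase 0 := by
    ext a; simp [Finset.mem_erase, and_comm]
  by_cases hc : c = 0
  · subst hc
    rw [if_pos rfl, hfe]
    have : ∀ a ∈ Finset.univ.erase (0 : F), lam F r (a * 0) = 1 := fun a _ => by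
      rw [mul_zero]; exact lam_zero
    rw [Finset.sum_congr rfl this, Finset.sum_const, Finset.card_erase_of_mem (Finset.mem_univ _),
      Finset.card_univ, hF]
    simp
  · rw [if_neg hc, hfe]
    have h0 := Finset.sum_erase_add Finset.univ (fun a : F => lam F r (a * c)) (Finset.mem_univ 0)
    rw [sum_lam_mul hr hF hc] at h0
    simp only [zero_mul, lam_zero] at h0
    omega

lemma sum_lam_V (hr : 1 ≤ r) (hF : Fintype.card F = 2 ^ r) (m : ℕ) :
    ∑ v ∈ Finset.univ.filter (fun v : Fin m → F => ∀ i, v i ≠ 0), lam F r (∑ i, v i)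
      = (-1 : ℤ) ^ m := by
  classical
  have hset : (Finset.univ.filter (fun v : Fin m → F => ∀ i, v i ≠ 0))
      = Fintype.piFinset (fun _ : Fin m => Finset.univ.filter (fun x : F => x ≠ 0)) := by
    ext v; simp [Fintype.mem_piFinset]
  have hsplit : ∀ v ∈ Fintype.piFinset (fun _ : Fin m => Finset.univ.filter (fun x : F => x ≠ 0)),
      lam F r (∑ i, v i) = ∏ i, lam F r (v i) := fun v _ => lam_sum hF _ _
  rw [hset, Finset.sum_congr rfl hsplit, ← Finset.prod_univ_sum]
  have hα : ∑ x ∈ Finset.univ.filter (fun x : F => x ≠ 0), lam F r x = -1 := by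
    have hfe : Finset.univ.filter (fun a : F => a ≠ 0) = Finset.univ.erase 0 := by
      ext a; simp [Finset.mem_erase, and_comm]
    have h0 := Finset.sum_erase_add Finset.univ (fun a : F => lam F r a) (Finset.mem_univ 0)
    rw [sum_lam_zero hr hF] at h0
    simp only [lam_zero] at h0
    rw [hfe]; omega
  rw [Finset.prod_congr rfl fun i _ => hα]
  simp

end Aux

theorem stmt9 (r : ℕ) (hr : 1 ≤ r) (F : Type) [Field F] [Fintype F] [DecidableEq F]
    (hF : Fintype.card F = 2 ^ r) (m : ℕ) (hm : 1 ≤ m) (β : F) :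
    (β ≠ 0 →
      ∑ a ∈ Finset.univ.filter (fun a : F => a ≠ 0), lam F r (-(a * β)) * Klm F r m a =
        (2 ^ r : ℤ) * Klm F r (m - 1) β⁻¹ + (-1 : ℤ) ^ (m + 1)) ∧
    (β = 0 →
      ∑ a ∈ Finset.univ.filter (fun a : F => a ≠ 0), lam F r (-(a * β)) * Klm F r m a =
        (-1 : ℤ) ^ (m + 1)) := by
  classical
  haveI hch : CharP F 2 := charF hr hF
  obtain ⟨k, rfl⟩ : ∃ k, m = k + 1 := ⟨m - 1, by omega⟩
  set A := Finset.univ.filter (fun a : F => a ≠ 0) with hA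
  set V := Finset.univ.filter (fun v : Fin (k + 1) → F => ∀ i, v i ≠ 0) with hVdef
  have hVmem : ∀ v : Fin (k + 1) → F, v ∈ V ↔ ∀ i, v i ≠ 0 := by
    intro v; rw [hVdef]; simp
  have prodV : ∀ v ∈ V, (∏ i, v i) ≠ 0 := fun v hv =>
    Finset.prod_ne_zero_iff.mpr fun i _ => (hVmem v).mp hv i
  have key : ∑ a ∈ A, lam F r (-(a * β)) * Klm F r (k + 1) a
      = (2 ^ r : ℤ) * (∑ v ∈ V.filter (fun v => (∏ i, v i)⁻¹ = β), lam F r (∑ i, v i))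
        + (-1 : ℤ) ^ (k + 1 + 1) := by
    have step1 : ∀ a ∈ A, lam F r (-(a * β)) * Klm F r (k + 1) a
        = ∑ v ∈ V, lam F r (∑ i, v i) * lam F r (a * (β + (∏ i, v i)⁻¹)) := by
      intro a _
      unfold Klm
      rw [Finset.mul_sum]
      refine Finset.sum_congr (by ext v; rw [hVmem]; simp) fun v _ => ?_
      rw [CharTwo.neg_eq, ← lam_add hF, ← lam_add hF]
      congr 1
      ring
    rw [Finset.sum_congr rfl step1, Finset.sum_comm]
    have step2 : ∀ v ∈ V, ∑ a ∈ A, lam F r (∑ i, v i) * lam F r (a * (β + (∏ i, v i)⁻¹))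
        = lam F r (∑ i, v i) * (if (∏ i, v i)⁻¹ = β then (2 ^ r - 1 : ℤ) else -1) := by
      intro v _
      rw [← Finset.mul_sum, hA, sum_lam_A hr hF]
      congr 2
      simp only [eq_iff_iff]
      constructor
      · intro h
        have h2 : (∏ i, v i)⁻¹ = -β := by linear_combination h
        rwa [CharTwo.neg_eq] at h2
      · intro h; rw [h]; exact CharTwo.add_self_eq_zero β
    rw [Finset.sum_congr rfl step2]
    have step3 : ∀ v ∈ V, lam F r (∑ i, v i) * (if (∏ i, v i)⁻¹ = β then (2 ^ r - 1 : ℤ) else -1)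
        = (if (∏ i, v i)⁻¹ = β then (2 ^ r : ℤ) * lam F r (∑ i, v i) else 0)
          + (-1) * lam F r (∑ i, v i) := by
      intro v _
      split_ifs <;> ring
    rw [Finset.sum_congr rfl step3, Finset.sum_add_distrib, ← Finset.sum_filter,
      ← Finset.mul_sum, ← Finset.mul_sum]
    have step4 : ∑ v ∈ V, lam F r (∑ i, v i) = (-1 : ℤ) ^ (k + 1) := by
      rw [hVdef]; exact sum_lam_V hr hF (k + 1)
    rw [step4]
    ring
  constructor
  · intro hβ
    rw [key]
    simp only [Nat.add_sub_cancel]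
    congr 2
    unfold Klm
    refine Finset.sum_nbij' (fun v => Fin.init v)
      (fun w => Fin.snoc w (β⁻¹ * (∏ i, w i)⁻¹)) ?_ ?_ ?_ ?_ ?_
    · intro v hv
      rw [Finset.mem_filter] at hv
      simp only [Finset.mem_filter, Finset.mem_univ, true_and]
      intro i
      exact (hVmem v).mp hv.1 i.castSucc
    · intro w hw
      simp only [Finset.mem_filter, Finset.mem_univ, true_and] at hw
      have hwprod : (∏ i, w i) ≠ 0 := Finset.prod_ne_zero_iff.mpr fun i _ => hw i
      have hlast : (β⁻¹ * (∏ i, w i)⁻¹) ≠ 0 :=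
        mul_ne_zero (inv_ne_zero hβ) (inv_ne_zero hwprod)
      rw [Finset.mem_filter]
      constructor
      · rw [hVmem]
        intro i
        refine Fin.lastCases ?_ ?_ i
        · simp only [Fin.snoc_last]; exact hlast
        · intro j; simp only [Fin.snoc_castSucc]; exact hw j
      · have : (∏ i, Fin.snoc w (β⁻¹ * (∏ i, w i)⁻¹) i) = β⁻¹ := by
          rw [Fin.prod_univ_castSucc]
          simp only [Fin.snoc_castSucc, Fin.snoc_last]
          field_simp
        rw [this, inv_inv]
    · intro v hv
      rw [Finset.mem_filter] at hv
      have hprod : ∏ i, v i = β⁻¹ := by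
        have := hv.2
        rw [inv_eq_iff_eq_inv] at this
        exact this
      have hinit : (∏ i, Fin.init v i) ≠ 0 :=
        Finset.prod_ne_zero_iff.mpr fun i _ => (hVmem v).mp hv.1 i.castSucc
      have hlast : β⁻¹ * (∏ i, Fin.init v i)⁻¹ = v (Fin.last k) := by
        rw [← hprod, Fin.prod_univ_castSucc]
        have he : (∏ i : Fin k, v (Fin.castSucc i)) = (∏ i : Fin k, Fin.init v i) := rfl
        rw [he, mul_comm (∏ i : Fin k, Fin.init v i) (v (Fin.last k)), mul_assoc,
          mul_inv_cancel₀ hinit, mul_one]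
      show Fin.snoc (Fin.init v) (β⁻¹ * (∏ i, Fin.init v i)⁻¹) = v
      rw [hlast]
      exact Fin.snoc_init_self v
    · intro w _
      exact Fin.init_snoc _ _
    · intro v hv
      rw [Finset.mem_filter] at hv
      have hprod : ∏ i, v i = β⁻¹ := by
        have := hv.2
        rw [inv_eq_iff_eq_inv] at this
        exact this
      have hinit : (∏ i, Fin.init v i) ≠ 0 :=
        Finset.prod_ne_zero_iff.mpr fun i _ => (hVmem v).mp hv.1 i.castSucc
      have hlast : β⁻¹ * (∏ i, Fin.init v i)⁻¹ = v (Fin.last k) := by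
        rw [← hprod, Fin.prod_univ_castSucc]
        have he : (∏ i : Fin k, v (Fin.castSucc i)) = (∏ i : Fin k, Fin.init v i) := rfl
        rw [he, mul_comm (∏ i : Fin k, Fin.init v i) (v (Fin.last k)), mul_assoc,
          mul_inv_cancel₀ hinit, mul_one]
      show lam F r (∑ i, v i)
          = lam F r ((∑ i, Fin.init v i) + β⁻¹ * (∏ i, Fin.init v i)⁻¹)
      rw [hlast, Fin.sum_univ_castSucc]
      rfl
  · intro hβ
    rw [key]
    have hempty : V.filter (fun v => (∏ i, v i)⁻¹ = β) = ∅ := by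
      refine Finset.filter_false_of_mem fun v hv => ?_
      rw [hβ]
      exact inv_ne_zero (prodV v hv)
    rw [hempty]
    simp
end

section
/- Let q = 2^r with r a positive integer and let β ∈ 𝔽_q^*. Then Σ_{α ∈ 𝔽_q \ {0,1}} λ(β/(α² + α)) = K(λ;β) − 1. -/
open Finset Matrix

section Stmt13Aux
open Polynomial
variable {F : Type} [Field F] (r : ℕ)

private lemma st13_char2 [Fintype F] (hF : Fintype.card F = 2 ^ r) : ringChar F = 2 := by
  have h0 : (Fintype.card F : F) = 0 := FiniteField.cast_card_eq_zero F
  have hdvd : ringChar F ∣ 2 ^ r := by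
    rw [← hF]; exact (CharP.cast_eq_zero_iff F (ringChar F) _).mp h0
  have hp : (ringChar F).Prime := CharP.char_is_prime F (ringChar F)
  exact (Nat.prime_dvd_prime_iff_eq hp Nat.prime_two).mp (hp.dvd_of_dvd_pow hdvd)

private lemma st13_trF_add [CharP F 2] (x y : F) :
    trF F r (x + y) = trF F r x + trF F r y := by
  haveI := Fact.mk Nat.prime_two
  unfold trF
  rw [← Finset.sum_add_distrib]
  exact Finset.sum_congr rfl fun i _ => add_pow_char_pow x y 2 i

private lemma st13_trF_sq [Fintype F] (hF : Fintype.card F = 2 ^ r) (x : F) :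
    trF F r (x ^ 2) = trF F r x := by
  have hx : x ^ 2 ^ r = x := by rw [← hF]; exact FiniteField.pow_card x
  have h1 : trF F r (x ^ 2) = ∑ i ∈ Finset.range r, x ^ 2 ^ (i + 1) := by
    unfold trF
    exact Finset.sum_congr rfl fun i _ => by rw [← pow_mul, pow_succ, mul_comm (2^i) 2]
  have h2 : ∑ i ∈ Finset.range (r + 1), x ^ 2 ^ i
      = (∑ i ∈ Finset.range r, x ^ 2 ^ (i + 1)) + x ^ 2 ^ 0 := Finset.sum_range_succ' _ _
  have h3 : ∑ i ∈ Finset.range (r + 1), x ^ 2 ^ i = trF F r x + x ^ 2 ^ r := by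
    unfold trF; exact Finset.sum_range_succ _ _
  rw [h1]
  have h4 := h2.symm.trans h3
  rw [hx, pow_zero, pow_one] at h4
  exact add_right_cancel h4

private lemma st13_trF_idem [Fintype F] (hF : Fintype.card F = 2 ^ r) (x : F) :
    trF F r x = 0 ∨ trF F r x = 1 := by
  haveI : CharP F 2 := by rw [← st13_char2 r hF]; exact ringChar.charP F
  haveI := Fact.mk Nat.prime_two
  have hs : (trF F r x) ^ 2 = trF F r x := by
    have h : (trF F r x) ^ 2 = trF F r (x ^ 2) := by
      unfold trF
      rw [sum_pow_char]
      exact Finset.sum_congr rfl fun i _ => by rw [← pow_mul, ← pow_mul, mul_comm]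
    rw [h, st13_trF_sq r hF]
  have hz : trF F r x * (trF F r x - 1) = 0 := by linear_combination hs
  rcases mul_eq_zero.mp hz with h | h
  · exact Or.inl h
  · exact Or.inr (sub_eq_zero.mp h)

private lemma st13_lam_add [Fintype F] (hF : Fintype.card F = 2 ^ r) (x y : F) :
    lam F r (x + y) = lam F r x * lam F r y := by
  haveI : CharP F 2 := by rw [← st13_char2 r hF]; exact ringChar.charP F
  have h11 : (1 : F) + 1 = 0 := by
    have h2 : (2 : F) = 0 := by exact_mod_cast CharP.cast_eq_zero F 2
    linear_combination h2
  unfold lam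
  rw [st13_trF_add]
  rcases st13_trF_idem r hF x with hx | hx <;> rcases st13_trF_idem r hF y with hy | hy <;>
    simp [hx, hy, h11, one_ne_zero]

private lemma st13_lam_zero : lam F r 0 = 1 := by
  have : trF F r 0 = 0 := by
    unfold trF
    exact Finset.sum_eq_zero fun i _ => zero_pow (by positivity)
  simp [lam, this]

private lemma st13_Z_card_le [Fintype F] [DecidableEq F] (hr : 1 ≤ r) :
    (Finset.univ.filter (fun x : F => trF F r x = 0)).card ≤ 2 ^ (r - 1) := by
  classical
  set p : F[X] := ∑ i ∈ Finset.range r, (X : F[X]) ^ 2 ^ i with hp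
  have hev : ∀ x : F, p.eval x = trF F r x := by
    intro x; simp [hp, trF, eval_finset_sum]
  have hco : p.coeff (2 ^ (r - 1)) = 1 := by
    rw [hp, finset_sum_coeff]
    rw [Finset.sum_eq_single (r - 1)]
    · simp
    · intro i hi hne
      rw [coeff_X_pow, if_neg]
      exact fun h => hne (Nat.pow_right_injective (le_refl 2) h.symm)
    · intro h; exact absurd (Finset.mem_range.mpr (by omega)) h
  have hpne : p ≠ 0 := fun h => by simp [h] at hco
  have hdeg : p.natDegree ≤ 2 ^ (r - 1) := by
    apply Polynomial.natDegree_sum_le_of_forall_le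
    intro i hi
    have hi' := Finset.mem_range.mp hi
    rw [natDegree_X_pow]
    exact Nat.pow_le_pow_right (by norm_num) (by omega : i ≤ r - 1)
  have hsub : Finset.univ.filter (fun x : F => trF F r x = 0) ⊆ p.roots.toFinset := by
    intro x hx
    rw [Multiset.mem_toFinset, mem_roots hpne]
    simp only [IsRoot.def, hev]
    exact (Finset.mem_filter.mp hx).2
  calc (Finset.univ.filter (fun x : F => trF F r x = 0)).card
      ≤ p.roots.toFinset.card := Finset.card_le_card hsub
    _ ≤ Multiset.card p.roots := p.roots.toFinset_card_le
    _ ≤ p.natDegree := p.card_roots'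
    _ ≤ 2 ^ (r - 1) := hdeg

private lemma st13_fiber_eq [CharP F 2] (α x : F) :
    x ^ 2 + x = α ^ 2 + α ↔ x = α ∨ x = α + 1 := by
  have h2 : (2 : F) = 0 := by exact_mod_cast CharP.cast_eq_zero F 2
  constructor
  · intro h
    have hz : (x - α) * (x - α - 1) = 0 := by
      linear_combination h + (α ^ 2 + α - x - α * x) * h2
    rcases mul_eq_zero.mp hz with h' | h'
    · exact Or.inl (by linear_combination h')
    · exact Or.inr (by linear_combination h')
  · rintro (rfl | rfl)
    · rfl
    · linear_combination (α + 1) * h2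

private lemma st13_image_eq [Fintype F] [DecidableEq F] (hr : 1 ≤ r)
    (hF : Fintype.card F = 2 ^ r) :
    Finset.univ.image (fun α : F => α ^ 2 + α)
      = Finset.univ.filter (fun x : F => trF F r x = 0) := by
  haveI : CharP F 2 := by rw [← st13_char2 r hF]; exact ringChar.charP F
  set f : F → F := fun α => α ^ 2 + α with hf
  set I := Finset.univ.image f with hI
  set Z := Finset.univ.filter (fun x : F => trF F r x = 0) with hZ
  have hsub : I ⊆ Z := by
    intro c hc
    rw [hI, Finset.mem_image] at hc
    obtain ⟨α, _, rfl⟩ := hc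
    rw [hZ, Finset.mem_filter]
    refine ⟨Finset.mem_univ _, ?_⟩
    rw [hf]
    simp only
    rw [st13_trF_add r, st13_trF_sq r hF]
    exact CharTwo.add_self_eq_zero _
  have hcard : Fintype.card F = 2 * I.card := by
    rw [← Finset.card_univ, Finset.card_eq_sum_card_image f Finset.univ, ← hI]
    rw [Finset.sum_congr rfl (fun c hc => ?_), Finset.sum_const, smul_eq_mul, mul_comm]
    rw [hI, Finset.mem_image] at hc
    obtain ⟨α, _, rfl⟩ := hc
    have hfil : Finset.univ.filter (fun x : F => f x = f α) = {α, α + 1} := by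
      ext x
      simp only [Finset.mem_filter, Finset.mem_univ, true_and, Finset.mem_insert,
        Finset.mem_singleton, hf]
      exact st13_fiber_eq α x
    rw [hfil, Finset.card_insert_of_notMem (by
      simp only [Finset.mem_singleton]
      intro h
      exact one_ne_zero (left_eq_add.mp h)), Finset.card_singleton]
  have hle : I.card ≤ Z.card := Finset.card_le_card hsub
  have hZle : Z.card ≤ 2 ^ (r - 1) := st13_Z_card_le r hr
  have h2r : 2 ^ r = 2 * 2 ^ (r - 1) := by
    rw [← pow_succ']
    congr 1
    omega
  have hIcard : I.card = 2 ^ (r - 1) := by omega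
  exact Finset.eq_of_subset_of_card_le hsub (by omega)

private lemma st13_Z_card [Fintype F] [DecidableEq F] (hr : 1 ≤ r)
    (hF : Fintype.card F = 2 ^ r) :
    (Finset.univ.filter (fun x : F => trF F r x = 0)).card = 2 ^ (r - 1) := by
  haveI : CharP F 2 := by rw [← st13_char2 r hF]; exact ringChar.charP F
  set f : F → F := fun α => α ^ 2 + α with hf
  have hcard : Fintype.card F = 2 * (Finset.univ.image f).card := by
    rw [← Finset.card_univ, Finset.card_eq_sum_card_image f Finset.univ]
    rw [Finset.sum_congr rfl (fun c hc => ?_), Finset.sum_const, smul_eq_mul, mul_comm]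
    rw [Finset.mem_image] at hc
    obtain ⟨α, _, rfl⟩ := hc
    have hfil : Finset.univ.filter (fun x : F => f x = f α) = {α, α + 1} := by
      ext x
      simp only [Finset.mem_filter, Finset.mem_univ, true_and, Finset.mem_insert,
        Finset.mem_singleton, hf]
      exact st13_fiber_eq α x
    rw [hfil, Finset.card_insert_of_notMem (by
      simp only [Finset.mem_singleton]
      intro h
      exact one_ne_zero (left_eq_add.mp h)), Finset.card_singleton]
  rw [← st13_image_eq r hr hF]
  have h2r : 2 ^ r = 2 * 2 ^ (r - 1) := by
    rw [← pow_succ']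
    congr 1
    omega
  show (Finset.univ.image f).card = 2 ^ (r - 1)
  omega

private lemma st13_sum_lam [Fintype F] [DecidableEq F] (hr : 1 ≤ r)
    (hF : Fintype.card F = 2 ^ r) : ∑ x : F, lam F r x = 0 := by
  classical
  have hZ := st13_Z_card r hr hF
  have heq : ∀ x : F, lam F r x = if trF F r x = 0 then (1 : ℤ) else -1 := by
    intro x; unfold lam; split <;> simp_all
  rw [Finset.sum_congr rfl fun x _ => heq x, Finset.sum_ite, Finset.sum_const,
    Finset.sum_const, hZ]
  have hcompl := Finset.card_filter_add_card_filter_not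
    (s := (Finset.univ : Finset F)) (p := fun x : F => trF F r x = 0)
  rw [Finset.card_univ, hF, hZ] at hcompl
  have h2r : 2 ^ r = 2 * 2 ^ (r - 1) := by
    rw [← pow_succ']; congr 1; omega
  have hc2 : (Finset.univ.filter (fun x : F => ¬ trF F r x = 0)).card = 2 ^ (r - 1) := by
    omega
  rw [hc2]
  simp

end Stmt13Aux

theorem stmt13 (r : ℕ) (hr : 1 ≤ r) (F : Type) [Field F] [Fintype F] [DecidableEq F]
    (hF : Fintype.card F = 2 ^ r) (β : F) (hβ : β ≠ 0) :
    ∑ α ∈ Finset.univ.filter (fun α : F => α ≠ 0 ∧ α ≠ 1), lam F r (β / (α ^ 2 + α)) =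
      Kl F r β - 1 := by
  classical
  haveI : CharP F 2 := by rw [← st13_char2 r hF]; exact ringChar.charP F
  have h11 : (1 : F) + 1 = 0 := CharTwo.add_self_eq_zero 1
  set f : F → F := fun α => α ^ 2 + α with hf
  set S : Finset F := Finset.univ.filter (fun α : F => α ≠ 0 ∧ α ≠ 1) with hS
  set Z' : Finset F := (Finset.univ.filter (fun x : F => trF F r x = 0)).erase 0 with hZ'
  -- basic facts about f
  have hf1 : f (1 : F) = 0 := by simp [hf, h11]
  have hfadd1 : ∀ α : F, f (α + 1) = f α := by
    intro α
    simp only [hf]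
    linear_combination (α + 1) * h11
  have hfne : ∀ α : F, α ≠ 0 → α ≠ 1 → f α ≠ 0 := by
    intro α h0 h1 hc
    have hfac : α * (α + 1) = 0 := by rw [← hc]; ring
    rcases mul_eq_zero.mp hfac with h | h
    · exact h0 h
    · exact h1 (by linear_combination h - h11)
  have hargS : ∀ α : F, f α ≠ 0 → α ≠ 0 ∧ α ≠ 1 := by
    intro α hne
    constructor
    · rintro rfl; exact hne (by simp [hf])
    · rintro rfl; exact hne hf1
  -- membership in Z'
  have hmaps : ∀ α ∈ S, f α ∈ Z' := by
    intro α hα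
    rw [hS, Finset.mem_filter] at hα
    obtain ⟨-, h0, h1⟩ := hα
    rw [hZ', Finset.mem_erase]
    refine ⟨hfne α h0 h1, ?_⟩
    rw [← st13_image_eq r hr hF]
    exact Finset.mem_image_of_mem f (Finset.mem_univ α)
  -- fiberwise decomposition
  have hfib : ∑ c ∈ Z', ∑ α ∈ S.filter (fun α => f α = c), lam F r (β / f α)
      = ∑ α ∈ S, lam F r (β / f α) := Finset.sum_fiberwise_of_maps_to hmaps _
  have hinner : ∀ c ∈ Z', ∑ α ∈ S.filter (fun α => f α = c), lam F r (β / f α)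
      = 2 * lam F r (β / c) := by
    intro c hc
    rw [hZ', Finset.mem_erase] at hc
    obtain ⟨hc0, hcZ⟩ := hc
    have hcI : c ∈ Finset.univ.image f := by rw [st13_image_eq r hr hF]; exact hcZ
    rw [Finset.mem_image] at hcI
    obtain ⟨α, -, hα⟩ := hcI
    have hfilter : S.filter (fun x => f x = c) = {α, α + 1} := by
      ext x
      simp only [Finset.mem_filter, hS, Finset.mem_univ, true_and, Finset.mem_insert,
        Finset.mem_singleton]
      constructor
      · rintro ⟨-, hx⟩
        rw [← hα] at hx
        exact (st13_fiber_eq α x).mp hx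
      · rintro (rfl | rfl)
        · exact ⟨hargS x (hα ▸ hc0), hα⟩
        · refine ⟨hargS _ ?_, by rw [hfadd1, hα]⟩
          rw [hfadd1, hα]; exact hc0
    have hne : α ≠ α + 1 := fun h => one_ne_zero (left_eq_add.mp h)
    rw [hfilter, Finset.sum_pair hne, hα, hfadd1, hα]
    ring
  have hstep1 : ∑ α ∈ S, lam F r (β / f α) = ∑ c ∈ Z', 2 * lam F r (β / c) := by
    rw [← hfib]
    exact Finset.sum_congr rfl hinner
  -- extend to all nonzero c
  set N : Finset F := Finset.univ.filter (fun c : F => c ≠ 0) with hN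
  have hsubN : Z' ⊆ N := by
    intro c hc
    rw [hZ', Finset.mem_erase] at hc
    rw [hN, Finset.mem_filter]
    exact ⟨Finset.mem_univ _, hc.1⟩
  have hstep2 : ∑ c ∈ Z', 2 * lam F r (β / c)
      = ∑ c ∈ N, (1 + lam F r c) * lam F r (β / c) := by
    have h1 : ∑ c ∈ Z', 2 * lam F r (β / c)
        = ∑ c ∈ Z', (1 + lam F r c) * lam F r (β / c) := by
      apply Finset.sum_congr rfl
      intro c hc
      rw [hZ', Finset.mem_erase, Finset.mem_filter] at hc
      have hl : lam F r c = 1 := by unfold lam; rw [if_pos hc.2.2]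
      rw [hl]; ring
    rw [h1]
    apply Finset.sum_subset hsubN
    intro c hc hcz
    rw [hN, Finset.mem_filter] at hc
    have htr : ¬ trF F r c = 0 := by
      intro h
      apply hcz
      rw [hZ', Finset.mem_erase, Finset.mem_filter]
      exact ⟨hc.2, Finset.mem_univ _, h⟩
    have hl : lam F r c = -1 := by unfold lam; rw [if_neg htr]
    rw [hl]; ring
  -- split the sum
  have hsplit : ∑ c ∈ N, (1 + lam F r c) * lam F r (β / c)
      = (∑ c ∈ N, lam F r (β / c)) + ∑ c ∈ N, lam F r c * lam F r (β / c) := by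
    rw [← Finset.sum_add_distrib]
    exact Finset.sum_congr rfl fun c _ => by ring
  have hK : ∑ c ∈ N, lam F r c * lam F r (β / c) = Kl F r β := by
    unfold Kl
    rw [hN]
    apply Finset.sum_congr (by ext x; simp)
    intro c hc
    rw [← st13_lam_add r hF]
    congr 1
    rw [div_eq_mul_inv]
  have hbij : ∑ c ∈ N, lam F r (β / c) = ∑ d ∈ N, lam F r d := by
    apply Finset.sum_nbij' (i := fun c => β / c) (j := fun d => β / d)
    · intro c hc
      rw [hN, Finset.mem_filter] at hc ⊢
      exact ⟨Finset.mem_univ _, div_ne_zero hβ hc.2⟩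
    · intro d hd
      rw [hN, Finset.mem_filter] at hd ⊢
      exact ⟨Finset.mem_univ _, div_ne_zero hβ hd.2⟩
    · intro c hc
      rw [hN, Finset.mem_filter] at hc
      field_simp
    · intro d hd
      rw [hN, Finset.mem_filter] at hd
      field_simp
    · intro c hc
      rfl
  have hsumN : ∑ d ∈ N, lam F r d = -1 := by
    have hNe : N = Finset.univ.erase 0 := by
      rw [hN]; exact Finset.filter_ne' Finset.univ 0
    rw [hNe, Finset.sum_erase_eq_sub (Finset.mem_univ (0 : F)),
      st13_sum_lam r hr hF, st13_lam_zero r]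
    ring
  calc ∑ α ∈ Finset.univ.filter (fun α : F => α ≠ 0 ∧ α ≠ 1), lam F r (β / (α ^ 2 + α))
      = ∑ α ∈ S, lam F r (β / f α) := rfl
    _ = ∑ c ∈ Z', 2 * lam F r (β / c) := hstep1
    _ = ∑ c ∈ N, (1 + lam F r c) * lam F r (β / c) := hstep2
    _ = (∑ c ∈ N, lam F r (β / c)) + ∑ c ∈ N, lam F r c * lam F r (β / c) := hsplit
    _ = -1 + Kl F r β := by rw [hK, hbij, hsumN]
    _ = Kl F r β - 1 := by ring
end
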